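/- Let P : ℝ → ℝ be continuous, positive and antitone (nonincreasing) on (0,∞). Let c > 0, let M ∈ (0, c), and let D be a Borel probability measure on ℝ supported in [-M, M] whose mean μ = ∫ η dD(η) is strictly positive. Then for every γ ∈ ℝ there exists p₀ ∈ ℝ such that for all p̂ ≥ p₀, the expected deviation gain −γ + ∫ ( η·p̂ + ∫_{c+η}^{c} P(a) da ) dD(η) is strictly positive. (This is the key step showing a noisy CFMM with positive-mean noise trades is not truthful for any finite privacy fee.) -/

import Mathlib

open MeasureTheory intervalIntegral

/-- A noisy CFMM with positive-mean noise trades is not truthful for any finite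
privacy fee: for any fee `γ` there is a threshold `p₀` such that for every true
price `phat ≥ p₀` the expected deviation gain is strictly positive. -/
theorem positive_mean_noise_not_truthful
    (P : ℝ → ℝ)
    (hPcont : ContinuousOn P (Set.Ioi 0))
    (hPpos : ∀ x ∈ Set.Ioi (0 : ℝ), 0 < P x)
    (hPanti : AntitoneOn P (Set.Ioi 0))
    (c M : ℝ) (hc : 0 < c) (hM : 0 < M) (hMc : M < c)
    (D : Measure ℝ) [IsProbabilityMeasure D]
    (hsupp : ∀ᵐ η ∂D, η ∈ Set.Icc (-M) M)
    (hmean : 0 < ∫ η, η ∂D) :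
    ∀ γ : ℝ, ∃ p₀ : ℝ, ∀ phat : ℝ, p₀ ≤ phat →
      0 < -γ + ∫ η, (η * phat + ∫ a in (c + η)..c, P a) ∂D := by
  intro γ
  set μ := ∫ η, η ∂D with hμdef
  have hcM : (0:ℝ) < c - M := by linarith
  -- a clamped version of P, continuous on all of ℝ
  set Q : ℝ → ℝ := fun a => P (min (max a (c - M)) (c + M)) with hQdef
  have hclamp_mem : ∀ a, min (max a (c - M)) (c + M) ∈ Set.Ioi (0:ℝ) := by
    intro a
    have h1 : c - M ≤ min (max a (c - M)) (c + M) :=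
      le_min (le_max_right _ _) (by linarith)
    simpa using lt_of_lt_of_le hcM h1
  have hQcont : Continuous Q := by
    apply hPcont.comp_continuous
    · exact (continuous_id.max continuous_const).min continuous_const
    · exact hclamp_mem
  have hQeq : ∀ a ∈ Set.Icc (c - M) (c + M), Q a = P a := by
    intro a ha
    simp only [hQdef, max_eq_left ha.1, min_eq_left ha.2]
  have hQle : ∀ a, Q a ≤ P (c - M) := by
    intro a
    refine hPanti (by simpa using hcM) (hclamp_mem a) ?_
    exact le_min (le_max_right _ _) (by linarith)
  have hQpos : ∀ a, 0 < Q a := fun a => hPpos _ (hclamp_mem a)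
  set B : ℝ := M * P (c - M) with hBdef
  have hBpos : 0 < B := mul_pos hM (hPpos _ (by simpa using hcM))
  -- primitive of Q
  set J : ℝ → ℝ := fun η => ∫ a in (c + η)..c, Q a with hJdef
  have hQint : ∀ a b : ℝ, IntervalIntegrable Q volume a b := fun a b =>
    hQcont.intervalIntegrable a b
  have hJcont : Continuous J := by
    have h1 : Continuous fun x : ℝ => ∫ a in x..c, Q a := by
      simp only [intervalIntegral.integral_symm c]
      exact (intervalIntegral.continuous_primitive hQint c).neg
    exact h1.comp (continuous_const.add continuous_id)
  have hJbound : ∀ η ∈ Set.Icc (-M) M, |J η| ≤ B := by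
    intro η hη
    rcases le_total 0 η with h0 | h0
    · have hle : c ≤ c + η := by linarith
      have hnn : 0 ≤ ∫ a in c..(c + η), Q a :=
        intervalIntegral.integral_nonneg hle (fun x _ => (hQpos x).le)
      have hub : (∫ a in c..(c + η), Q a) ≤ B := by
        have := intervalIntegral.integral_mono_on hle (hQint c (c + η))
          (intervalIntegrable_const) (fun x _ => hQle x)
        simp only [intervalIntegral.integral_const, smul_eq_mul] at this
        calc (∫ a in c..(c + η), Q a) ≤ (c + η - c) * P (c - M) := this
          _ ≤ B := by
              rw [hBdef]
              have : c + η - c ≤ M := by linarith [hη.2]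
              nlinarith [hPpos (c - M) (by simpa using hcM)]
      have : J η = -(∫ a in c..(c + η), Q a) := by
        rw [hJdef]; exact intervalIntegral.integral_symm c (c + η)
      rw [this, abs_neg, abs_of_nonneg hnn]; exact hub
    · have hle : c + η ≤ c := by linarith
      have hnn : 0 ≤ J η :=
        intervalIntegral.integral_nonneg hle (fun x _ => (hQpos x).le)
      have hub : J η ≤ B := by
        have := intervalIntegral.integral_mono_on hle (hQint (c + η) c)
          (intervalIntegrable_const) (fun x _ => hQle x)
        simp only [intervalIntegral.integral_const, smul_eq_mul] at this
        calc J η ≤ (c - (c + η)) * P (c - M) := this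
          _ ≤ B := by
              rw [hBdef]
              have : c - (c + η) ≤ M := by linarith [hη.1]
              nlinarith [hPpos (c - M) (by simpa using hcM)]
      rw [abs_of_nonneg hnn]; exact hub
  -- a.e. equality of the inner integrals
  have hinner : ∀ᵐ η ∂D, (∫ a in (c + η)..c, P a) = J η := by
    filter_upwards [hsupp] with η hη
    rw [hJdef]
    refine (intervalIntegral.integral_congr ?_).symm
    intro a ha
    apply hQeq
    have hsub : Set.uIcc (c + η) c ⊆ Set.Icc (c - M) (c + M) := by
      apply Set.uIcc_subset_Icc
      · constructor <;> linarith [hη.1, hη.2]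
      · constructor <;> linarith
    exact hsub ha
  -- integrability
  have hid_int : Integrable (fun η : ℝ => η) D := by
    refine Integrable.mono' (integrable_const M) aestronglyMeasurable_id ?_
    filter_upwards [hsupp] with η hη
    rw [Real.norm_eq_abs, abs_le]; exact ⟨hη.1, hη.2⟩
  have hJ_int : Integrable J D := by
    refine Integrable.mono' (integrable_const B) hJcont.aestronglyMeasurable ?_
    filter_upwards [hsupp] with η hη
    exact hJbound η hη
  refine ⟨(γ + B + 1) / μ, fun phat hphat => ?_⟩
  have hid_int' : Integrable (fun η : ℝ => η * phat) D := hid_int.mul_const phat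
  have key : (∫ η, (η * phat + ∫ a in (c + η)..c, P a) ∂D)
      = μ * phat + ∫ η, J η ∂D := by
    have h1 : (∫ η, (η * phat + ∫ a in (c + η)..c, P a) ∂D)
        = ∫ η, (η * phat + J η) ∂D := by
      apply MeasureTheory.integral_congr_ae
      filter_upwards [hinner] with η hη
      rw [hη]
    rw [h1, integral_add hid_int' hJ_int, MeasureTheory.integral_mul_const]
  have hJlb : -B ≤ ∫ η, J η ∂D := by
    have : (∫ _η, (-B) ∂D) ≤ ∫ η, J η ∂D := by
      apply integral_mono_ae (integrable_const _) hJ_int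
      filter_upwards [hsupp] with η hη
      have := hJbound η hη
      rw [abs_le] at this; exact this.1
    simpa using this
  have hμphat : γ + B + 1 ≤ μ * phat := by
    rw [div_le_iff₀ hmean] at hphat
    nlinarith
  rw [key]
  linarith
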